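/- There exists a universal constant C > 0 such that for every real α > 2, every real Φ ≥ 1, every finite metric space (X,d) with at least two points and aspect ratio Φ(X) ≤ Φ, and every weight function w : X → (0,∞), setting ψ = max(0, 1 − C·(log α + log log(4Φ))/α), there exists a subset Y ⊆ X and an ultrametric ρ on Y with d(x,y) ≤ ρ(x,y) ≤ α·d(x,y) for all x,y ∈ Y, such that Σ_{y∈Y} w(y)^ψ ≥ (Σ_{x∈X} w(x))^ψ. -/

import Mathlib

/-- `ρ` is an ultrametric on the subset `Y` of `X`. -/
def IsUltrametricOn {X : Type} (Y : Set X) (ρ : X → X → ℝ) : Prop :=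
  (∀ x ∈ Y, ρ x x = 0) ∧
  (∀ x ∈ Y, ∀ y ∈ Y, x ≠ y → 0 < ρ x y) ∧
  (∀ x ∈ Y, ∀ y ∈ Y, ρ x y = ρ y x) ∧
  (∀ x ∈ Y, ∀ y ∈ Y, ∀ z ∈ Y, ρ x z ≤ max (ρ x y) (ρ y z))




open Finset

namespace WR

set_option linter.unusedSectionVars false

variable {X : Type} [DecidableEq X]

def lsum (w : X → ℝ) (l : List X) : ℝ := (l.map w).sum

@[simp] lemma lsum_nil (w : X → ℝ) : lsum w [] = 0 := rfl
@[simp] lemma lsum_cons (w : X → ℝ) (a : X) (l : List X) :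
    lsum w (a :: l) = w a + lsum w l := by simp [lsum]

noncomputable def plw (w : X → ℝ) : List X → ℝ
  | [] => 1
  | a :: l => (w a / (w a + lsum w l)) * plw w l

@[simp] lemma plw_nil (w : X → ℝ) : plw w [] = 1 := rfl
@[simp] lemma plw_cons (w : X → ℝ) (a : X) (l : List X) :
    plw w (a :: l) = (w a / (w a + lsum w l)) * plw w l := rfl

def orders : ℕ → Finset X → Finset (List X)
  | 0, _ => {[]}
  | n+1, S => S.biUnion fun a => ((orders n (S.erase a)).image (a :: ·))

lemma orders_zero (S : Finset X) : orders 0 S = {[]} := rfl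
lemma orders_succ (n : ℕ) (S : Finset X) :
    orders (n+1) S = S.biUnion fun a => ((orders n (S.erase a)).image (a :: ·)) := rfl

lemma sum_orders_succ {M : Type} [AddCommMonoid M] (f : List X → M) (n : ℕ) (S : Finset X) :
    ∑ l ∈ orders (n+1) S, f l = ∑ a ∈ S, ∑ l ∈ orders n (S.erase a), f (a :: l) := by
  show ∑ l ∈ S.biUnion _, f l = _
  rw [Finset.sum_biUnion]
  · exact Finset.sum_congr rfl fun a _ => Finset.sum_image (fun x _ y _ h => by
      simpa using h)
  · intro a _ b _ hab
    apply Finset.disjoint_left.mpr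
    intro l hla hlb
    obtain ⟨u, _, rfl⟩ := Finset.mem_image.mp hla
    obtain ⟨v, _, hv⟩ := Finset.mem_image.mp hlb
    exact hab (by injection hv with h1 _; exact h1.symm)

lemma lsum_of_orders (w : X → ℝ) :
    ∀ n (S : Finset X), S.card = n → ∀ l ∈ orders n S, lsum w l = ∑ x ∈ S, w x := by
  intro n
  induction n with
  | zero =>
    intro S hS l hl
    rw [Finset.card_eq_zero.mp hS]
    rw [orders_zero, Finset.mem_singleton] at hl
    subst hl; simp
  | succ n ih =>
    intro S hS l hl
    rw [orders_succ, Finset.mem_biUnion] at hl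
    obtain ⟨a, ha, hl⟩ := hl
    obtain ⟨l', hl', rfl⟩ := Finset.mem_image.mp hl
    rw [lsum_cons, ih (S.erase a) (by rw [Finset.card_erase_of_mem ha, hS]; rfl) l' hl',
      Finset.add_sum_erase _ _ ha]

lemma sum_plw (w : X → ℝ) :
    ∀ n (S : Finset X), S.card = n → (∀ x ∈ S, 0 < w x) →
      ∑ l ∈ orders n S, plw w l = 1 := by
  intro n
  induction n with
  | zero => intro S hS _; rw [orders_zero, Finset.sum_singleton, plw_nil]
  | succ n ih =>
    intro S hS hw
    have hSpos : 0 < ∑ x ∈ S, w x := by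
      apply Finset.sum_pos hw
      exact Finset.card_pos.mp (by omega)
    rw [sum_orders_succ]
    have : ∀ a ∈ S, ∑ l ∈ orders n (S.erase a), plw w (a :: l) = w a / (∑ x ∈ S, w x) := by
      intro a ha
      have hcard : (S.erase a).card = n := by rw [Finset.card_erase_of_mem ha, hS]; rfl
      have : ∀ l ∈ orders n (S.erase a), plw w (a :: l) = (w a / ∑ x ∈ S, w x) * plw w l := by
        intro l hl
        rw [plw_cons, lsum_of_orders w n _ hcard l hl, Finset.add_sum_erase _ _ ha]
      rw [Finset.sum_congr rfl this, ← Finset.mul_sum,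
        ih _ hcard (fun x hx => hw x (Finset.mem_of_mem_erase hx)), mul_one]
    rw [Finset.sum_congr rfl this, ← Finset.sum_div, div_self (ne_of_gt hSpos)]

def goodB (U T : Finset X) : List X → Bool
  | [] => false
  | a :: l => if a ∈ U then decide (a ∈ T) else goodB U T l

lemma sum_plw_good (w : X → ℝ) :
    ∀ n (S : Finset X), S.card = n → (∀ x ∈ S, 0 < w x) →
      ∀ T U : Finset X, T ⊆ U → U ⊆ S → U.Nonempty →
      ∑ l ∈ orders n S, (if goodB U T l then plw w l else 0)
        = (∑ x ∈ T, w x) / (∑ x ∈ U, w x) := by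
  intro n
  induction n with
  | zero =>
    intro S hS _ T U _ hUS hU
    exact absurd (Finset.card_eq_zero.mp hS ▸ hUS hU.choose_spec) (by simp)
  | succ n ih =>
    intro S hS hw T U hTU hUS hU
    have hSpos : 0 < ∑ x ∈ S, w x := by
      apply Finset.sum_pos hw
      exact Finset.card_pos.mp (by omega)
    have hUpos : 0 < ∑ x ∈ U, w x := Finset.sum_pos (fun x hx => hw x (hUS hx)) hU
    rw [sum_orders_succ]
    have key : ∀ a ∈ S, (∑ l ∈ orders n (S.erase a), if goodB U T (a :: l) then plw w (a :: l) else 0)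
        = if a ∈ T then w a / (∑ x ∈ S, w x)
          else if a ∈ U then 0
          else (w a / (∑ x ∈ S, w x)) * ((∑ x ∈ T, w x) / (∑ x ∈ U, w x)) := by
      intro a ha
      have hcard : (S.erase a).card = n := by rw [Finset.card_erase_of_mem ha, hS]; rfl
      have hplw : ∀ l ∈ orders n (S.erase a),
          plw w (a :: l) = (w a / ∑ x ∈ S, w x) * plw w l := by
        intro l hl
        rw [plw_cons, lsum_of_orders w n _ hcard l hl, Finset.add_sum_erase _ _ ha]
      by_cases haU : a ∈ U
      · have hgood : ∀ l, goodB U T (a :: l) = decide (a ∈ T) := by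
          intro l; show (if a ∈ U then _ else _) = _; rw [if_pos haU]
        by_cases haT : a ∈ T
        · rw [if_pos haT]
          have : ∀ l ∈ orders n (S.erase a),
              (if goodB U T (a :: l) then plw w (a :: l) else 0)
                = (w a / ∑ x ∈ S, w x) * plw w l := by
            intro l hl
            rw [hgood, if_pos (by simpa using haT), hplw l hl]
          rw [Finset.sum_congr rfl this, ← Finset.mul_sum,
            sum_plw w n _ hcard (fun x hx => hw x (Finset.mem_of_mem_erase hx)), mul_one]
        · rw [if_neg haT, if_pos haU]
          apply Finset.sum_eq_zero
          intro l hl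
          rw [hgood, if_neg (by simpa using haT)]
      · rw [if_neg (fun haT => haU (hTU haT)), if_neg haU]
        have hgood : ∀ l, goodB U T (a :: l) = goodB U T l := by
          intro l; show (if a ∈ U then _ else _) = _; rw [if_neg haU]
        have : ∀ l ∈ orders n (S.erase a),
            (if goodB U T (a :: l) then plw w (a :: l) else 0)
              = (w a / ∑ x ∈ S, w x) * (if goodB U T l then plw w l else 0) := by
          intro l hl
          rw [hgood]
          by_cases hg : goodB U T l
          · rw [if_pos hg, if_pos hg, hplw l hl]
          · rw [if_neg hg, if_neg hg, mul_zero]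
        rw [Finset.sum_congr rfl this, ← Finset.mul_sum,
          ih _ hcard (fun x hx => hw x (Finset.mem_of_mem_erase hx)) T U hTU
            (fun x hx => Finset.mem_erase.mpr ⟨fun h => haU (h ▸ hx), hUS hx⟩) hU]
    rw [Finset.sum_congr rfl key]
    have hsplit := Finset.sum_filter_add_sum_filter_not S (· ∈ U)
      (fun a => if a ∈ T then w a / (∑ x ∈ S, w x)
          else if a ∈ U then 0
          else (w a / (∑ x ∈ S, w x)) * ((∑ x ∈ T, w x) / (∑ x ∈ U, w x)))
    rw [← hsplit]
    have h1 : ∑ a ∈ S.filter (· ∈ U), (if a ∈ T then w a / (∑ x ∈ S, w x)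
          else if a ∈ U then 0
          else (w a / (∑ x ∈ S, w x)) * ((∑ x ∈ T, w x) / (∑ x ∈ U, w x)))
        = (∑ x ∈ T, w x) / (∑ x ∈ S, w x) := by
      have hfU : S.filter (· ∈ U) = U := by
        ext x; simp only [Finset.mem_filter]
        exact ⟨fun h => h.2, fun h => ⟨hUS h, h⟩⟩
      rw [hfU]
      have : ∀ a ∈ U, (if a ∈ T then w a / (∑ x ∈ S, w x)
          else if a ∈ U then 0
          else (w a / (∑ x ∈ S, w x)) * ((∑ x ∈ T, w x) / (∑ x ∈ U, w x)))
          = if a ∈ T then w a / (∑ x ∈ S, w x) else 0 := by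
        intro a ha
        by_cases haT : a ∈ T
        · rw [if_pos haT, if_pos haT]
        · rw [if_neg haT, if_pos ha, if_neg haT]
      rw [Finset.sum_congr rfl this, ← Finset.sum_filter]
      have hfT : U.filter (· ∈ T) = T := by
        ext x; simp only [Finset.mem_filter]
        exact ⟨fun h => h.2, fun h => ⟨hTU h, h⟩⟩
      rw [hfT, Finset.sum_div]
    have h2 : ∑ a ∈ S.filter (¬ · ∈ U), (if a ∈ T then w a / (∑ x ∈ S, w x)
          else if a ∈ U then 0
          else (w a / (∑ x ∈ S, w x)) * ((∑ x ∈ T, w x) / (∑ x ∈ U, w x)))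
        = ((∑ x ∈ S, w x) - (∑ x ∈ U, w x)) / (∑ x ∈ S, w x)
            * ((∑ x ∈ T, w x) / (∑ x ∈ U, w x)) := by
      have : ∀ a ∈ S.filter (¬ · ∈ U), (if a ∈ T then w a / (∑ x ∈ S, w x)
          else if a ∈ U then 0
          else (w a / (∑ x ∈ S, w x)) * ((∑ x ∈ T, w x) / (∑ x ∈ U, w x)))
          = (w a / (∑ x ∈ S, w x)) * ((∑ x ∈ T, w x) / (∑ x ∈ U, w x)) := by
        intro a ha
        have haU : a ∉ U := by simpa using (Finset.mem_filter.mp ha).2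
        rw [if_neg (fun haT => haU (hTU haT)), if_neg haU]
      rw [Finset.sum_congr rfl this, ← Finset.sum_mul, ← Finset.sum_div]
      congr 2
      have := Finset.sum_filter_add_sum_filter_not S (· ∈ U) w
      have hfU : S.filter (· ∈ U) = U := by
        ext x; simp only [Finset.mem_filter]
        exact ⟨fun h => h.2, fun h => ⟨hUS h, h⟩⟩
      rw [hfU] at this
      linarith
    rw [h1, h2]
    field_simp
    ring



section Metric

variable {X : Type} [DecidableEq X] [MetricSpace X] [Fintype X]

open Classical in
noncomputable def ctr (l : List X) (r : ℝ) (x : X) : X :=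
  (l.find? (fun y => decide (dist y x ≤ r))).getD x

open Classical in
noncomputable def ball (x : X) (s : ℝ) : Finset X :=
  univ.filter (fun z => dist z x ≤ s)

lemma mem_ball_iff {x z : X} {s : ℝ} : z ∈ ball x s ↔ dist z x ≤ s := by
  classical
  simp [ball]

lemma ball_mono {x : X} {s s' : ℝ} (h : s ≤ s') : ball x s ⊆ ball x s' := by
  intro z hz
  exact mem_ball_iff.mpr (le_trans (mem_ball_iff.mp hz) h)

lemma self_mem_ball {x : X} {s : ℝ} (hs : 0 ≤ s) : x ∈ ball x s :=
  mem_ball_iff.mpr (by simpa using hs)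

lemma dist_ctr_le {l : List X} {r : ℝ} {x : X} (hr : 0 ≤ r) :
    dist (ctr l r x) x ≤ r := by
  unfold ctr
  cases h : l.find? (fun y => decide (dist y x ≤ r)) with
  | none => simpa using hr
  | some c =>
    have := List.find?_some h
    simpa using this

lemma dist_le_of_ctr_eq {l : List X} {r : ℝ} {x y : X} (hr : 0 ≤ r)
    (h : ctr l r x = ctr l r y) : dist x y ≤ 2 * r := by
  calc dist x y ≤ dist x (ctr l r x) + dist (ctr l r y) y := by
        rw [h]; exact dist_triangle _ _ _
    _ ≤ r + r := by
        rw [dist_comm x _]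
        exact add_le_add (dist_ctr_le hr) (dist_ctr_le hr)
    _ = 2 * r := by ring

lemma ctr_eq_of_good {l : List X} {r t : ℝ} {x : X} (ht : 0 ≤ t)
    (hg : goodB (ball x (r + t)) (ball x (r - t)) l = true) :
    ∀ z, dist x z ≤ t → ctr l r z = ctr l r x := by
  induction l with
  | nil => exact absurd hg (by simp [goodB])
  | cons a l ih =>
    intro z hz
    rw [show goodB (ball x (r + t)) (ball x (r - t)) (a :: l)
        = if a ∈ ball x (r + t) then decide (a ∈ ball x (r - t))
          else goodB (ball x (r + t)) (ball x (r - t)) l from rfl] at hg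
    by_cases haU : a ∈ ball x (r + t)
    · rw [if_pos haU] at hg
      have haT : dist a x ≤ r - t := mem_ball_iff.mp (by simpa using hg)
      have h1 : dist a z ≤ r := by
        calc dist a z ≤ dist a x + dist x z := dist_triangle _ _ _
          _ ≤ (r - t) + t := add_le_add haT hz
          _ = r := by ring
      have h2 : dist a x ≤ r := by linarith
      unfold ctr
      rw [List.find?_cons_of_pos (by simpa using h1),
        List.find?_cons_of_pos (by simpa using h2)]
      rfl
    · rw [if_neg haU] at hg
      have haU' : r + t < dist a x := lt_of_not_ge (fun h => haU (mem_ball_iff.mpr h))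
      have h1 : ¬ dist a z ≤ r := by
        have : dist a x ≤ dist a z + dist x z := by
          calc dist a x ≤ dist a z + dist z x := dist_triangle _ _ _
            _ = dist a z + dist x z := by rw [dist_comm z x]
        intro hc; linarith
      have h2 : ¬ dist a x ≤ r := by intro hc; linarith
      unfold ctr
      rw [List.find?_cons_of_neg (by simpa using h1),
        List.find?_cons_of_neg (by simpa using h2)]
      exact ih hg z hz

noncomputable def wb (w : X → ℝ) (x : X) (s : ℝ) : ℝ := ∑ z ∈ ball x s, w z

lemma wb_pos {w : X → ℝ} (hw : ∀ x, 0 < w x) {x : X} {s : ℝ} (hs : 0 ≤ s) :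
    0 < wb w x s :=
  Finset.sum_pos (fun z _ => hw z) ⟨x, self_mem_ball hs⟩

lemma wb_mono {w : X → ℝ} (hw : ∀ x, 0 < w x) {x : X} {s s' : ℝ} (h : s ≤ s') :
    wb w x s ≤ wb w x s' :=
  Finset.sum_le_sum_of_subset_of_nonneg (ball_mono h) (fun z _ _ => le_of_lt (hw z))

lemma prod_div_telescope (f : ℕ → ℝ) (hf : ∀ j, 0 < f j) :
    ∀ N : ℕ, ∏ i ∈ range N, f i / f (i + 1) = f 0 / f N := by
  intro N
  induction N with
  | zero => simp [div_self (ne_of_gt (hf 0))]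
  | succ n ih =>
    rw [Finset.prod_range_succ, ih, div_mul_div_comm,
      mul_comm (f 0) (f n), ← div_mul_div_comm, div_self (ne_of_gt (hf n)), one_mul]

noncomputable def Osc (w : X → ℝ) (N : ℕ) : Finset (List X × ℕ) :=
  (orders (Fintype.card X) (univ : Finset X)) ×ˢ (range N)

noncomputable def musc (w : X → ℝ) (N : ℕ) (a : List X × ℕ) : ℝ := plw w a.1 / N

lemma lsum_nonneg {w : X → ℝ} (hw : ∀ x, 0 < w x) (l : List X) : 0 ≤ lsum w l := by
  induction l with
  | nil => simp
  | cons c l ih => rw [lsum_cons]; linarith [hw c]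

lemma plw_pos {w : X → ℝ} (hw : ∀ x, 0 < w x) (l : List X) : 0 < plw w l := by
  induction l with
  | nil => norm_num
  | cons b l ih =>
    rw [plw_cons]
    apply mul_pos _ ih
    apply div_pos (hw b)
    linarith [hw b, lsum_nonneg hw l]

lemma musc_nonneg {w : X → ℝ} (hw : ∀ x, 0 < w x) (N : ℕ) (a : List X × ℕ) :
    0 ≤ musc w N a :=
  div_nonneg (le_of_lt (plw_pos hw a.1)) (Nat.cast_nonneg N)

lemma sum_musc {w : X → ℝ} (hw : ∀ x, 0 < w x) {N : ℕ} (hN : 1 ≤ N) :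
    ∑ a ∈ Osc w N, musc w N a = 1 := by
  unfold Osc musc
  rw [Finset.sum_product]
  have : ∀ l ∈ orders (Fintype.card X) (univ : Finset X),
      ∑ _i ∈ range N, plw w l / N = plw w l := by
    intro l _
    rw [Finset.sum_const, card_range, nsmul_eq_mul]
    field_simp
  rw [Finset.sum_congr rfl this,
    sum_plw w (Fintype.card X) univ (by simp) (fun x _ => hw x)]

lemma pad_prob {w : X → ℝ} (hw : ∀ x, 0 < w x) {N : ℕ} (hN : 1 ≤ N)
    {q t : ℝ} (hq : 0 ≤ q) (ht : 0 ≤ t) (x : X) :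
    (wb w x q / wb w x (q + 2 * N * t)) ^ ((1:ℝ) / N) ≤
      ∑ a ∈ Osc w N, musc w N a *
        (if goodB (ball x ((q + (2 * a.2 + 1) * t) + t))
            (ball x ((q + (2 * a.2 + 1) * t) - t)) a.1 then 1 else 0) := by
  classical
  set f : ℕ → ℝ := fun j => wb w x (q + 2 * j * t) with hf
  have hfpos : ∀ j, 0 < f j := by
    intro j
    apply wb_pos hw
    have : (0:ℝ) ≤ 2 * j * t := by positivity
    linarith
  have key : ∀ i ∈ range N,
      ∑ l ∈ orders (Fintype.card X) (univ : Finset X),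
        (plw w l / N) * (if goodB (ball x ((q + (2 * i + 1) * t) + t))
            (ball x ((q + (2 * i + 1) * t) - t)) l then 1 else 0)
        = (1 / N) * (f i / f (i + 1)) := by
    intro i _
    have hsub : ball x ((q + (2 * i + 1) * t) - t) ⊆ ball x ((q + (2 * i + 1) * t) + t) :=
      ball_mono (by linarith)
    have : ∀ l, (plw w l / N) * (if goodB (ball x ((q + (2 * i + 1) * t) + t))
            (ball x ((q + (2 * i + 1) * t) - t)) l then 1 else 0)
          = (1 / N) * (if goodB (ball x ((q + (2 * i + 1) * t) + t))
            (ball x ((q + (2 * i + 1) * t) - t)) l then plw w l else 0) := by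
      intro l
      by_cases hgood : goodB (ball x ((q + (2 * i + 1) * t) + t))
            (ball x ((q + (2 * i + 1) * t) - t)) l
      · rw [if_pos hgood, if_pos hgood]; ring
      · rw [if_neg hgood, if_neg hgood]; ring
    rw [Finset.sum_congr rfl (fun l _ => this l), ← Finset.mul_sum,
      sum_plw_good w (Fintype.card X) univ (by simp) (fun x _ => hw x) _ _
        hsub (Finset.subset_univ _) ⟨x, self_mem_ball (by
          have h1 : (0:ℝ) ≤ (2 * (i:ℝ) + 1) * t := by positivity
          linarith)⟩]
    have e1 : (q + (2 * (i:ℝ) + 1) * t) - t = q + 2 * i * t := by ring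
    have e2 : (q + (2 * (i:ℝ) + 1) * t) + t = q + 2 * ((i:ℝ) + 1) * t := by ring
    rw [e1, e2]
    have : ((i:ℝ) + 1) = ((i + 1 : ℕ) : ℝ) := by push_cast; ring
    rw [this]
    rfl
  unfold Osc musc
  rw [Finset.sum_product_right]
  have step : ∑ i ∈ range N, ∑ l ∈ orders (Fintype.card X) (univ : Finset X),
        (plw w (l, i).1 / N) * (if goodB (ball x ((q + (2 * (l, i).2 + 1) * t) + t))
            (ball x ((q + (2 * (l, i).2 + 1) * t) - t)) (l, i).1 then 1 else 0)
      = ∑ i ∈ range N, (1 / N) * (f i / f (i + 1)) :=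
    Finset.sum_congr rfl (fun i hi => key i hi)
  rw [step]
  have amgm := Real.geom_mean_le_arith_mean_weighted (range N) (fun _ => 1 / N)
    (fun i => f i / f (i + 1)) (fun i _ => by positivity)
    (by rw [Finset.sum_const, card_range, nsmul_eq_mul]; field_simp)
    (fun i _ => le_of_lt (div_pos (hfpos i) (hfpos (i + 1))))
  calc (wb w x q / wb w x (q + 2 * N * t)) ^ ((1:ℝ) / N)
      = (∏ i ∈ range N, f i / f (i + 1)) ^ ((1:ℝ) / N) := by
        rw [prod_div_telescope f hfpos N]
        congr 2
        simp [hf]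
    _ = ∏ i ∈ range N, (f i / f (i + 1)) ^ ((1:ℝ) / N) :=
        (Real.finset_prod_rpow _ _ (fun i _ => le_of_lt (div_pos (hfpos i) (hfpos (i+1)))) _).symm
    _ ≤ ∑ i ∈ range N, (1 / N) * (f i / f (i + 1)) := amgm

end Metric


lemma chain_prod (A B : ℕ → ℝ) (hApos : ∀ k, 0 < A k) (hAB : ∀ k, A k ≤ B k)
    (hBA : ∀ k, B (k + 1) ≤ A k) :
    ∀ K : ℕ, A K / B 0 ≤ ∏ k ∈ range (K + 1), A k / B k := by
  have hBpos : ∀ k, 0 < B k := fun k => lt_of_lt_of_le (hApos k) (hAB k)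
  intro K
  induction K with
  | zero => simp
  | succ K ih =>
    rw [Finset.prod_range_succ]
    have h2 : 1 ≤ A K / B (K + 1) := (one_le_div (hBpos (K + 1))).mpr (hBA K)
    calc A (K + 1) / B 0 = (A (K + 1) / B 0) * 1 := by ring
      _ ≤ (A (K + 1) / B 0) * (A K / B (K + 1)) := by
          apply mul_le_mul_of_nonneg_left h2
          exact le_of_lt (div_pos (hApos _) (hBpos _))
      _ = (A K / B 0) * (A (K + 1) / B (K + 1)) := by ring
      _ ≤ (∏ k ∈ range (K + 1), A k / B k) * (A (K + 1) / B (K + 1)) := by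
          apply mul_le_mul_of_nonneg_right ih
          exact le_of_lt (div_pos (hApos _) (hBpos _))

section Core

variable {X : Type} [DecidableEq X] [MetricSpace X] [Fintype X]

theorem core (hcard : 2 ≤ Fintype.card X) (w : X → ℝ) (hw : ∀ x, 0 < w x)
    (α : ℝ) (hα : 64 ≤ α) :
    ∃ (Y : Finset X) (ρ : X → X → ℝ),
      IsUltrametricOn (↑Y) ρ ∧
      (∀ x ∈ Y, ∀ y ∈ Y, dist x y ≤ ρ x y ∧ ρ x y ≤ α * dist x y) ∧
      (∑ x, w x) ^ (1 - 1 / ((⌊α / 32⌋₊ : ℕ) : ℝ)) ≤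
        ∑ y ∈ Y, w y ^ (1 - 1 / ((⌊α / 32⌋₊ : ℕ) : ℝ)) := by
  classical
  have hα0 : (0:ℝ) < α := by linarith
  set N : ℕ := ⌊α / 32⌋₊ with hNdef
  have hN1 : 1 ≤ N := Nat.le_floor (by
    rw [Nat.cast_one, le_div_iff₀ (by norm_num : (0:ℝ) < 32)]; linarith)
  have hNα : (N : ℝ) ≤ α / 32 := Nat.floor_le (by positivity)
  have hNpos : (0:ℝ) < N := by exact_mod_cast hN1
  -- basic metric quantities
  obtain ⟨x₀, y₀, hxy₀⟩ := Fintype.exists_pair_of_one_lt_card (show 1 < Fintype.card X by omega)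
  have hPne : (univ.offDiag : Finset (X × X)).Nonempty :=
    ⟨(x₀, y₀), Finset.mem_offDiag.mpr ⟨mem_univ _, mem_univ _, hxy₀⟩⟩
  set m : ℝ := (univ.offDiag : Finset (X × X)).inf' hPne (fun p => dist p.1 p.2) with hmdef
  set D : ℝ := (univ.offDiag : Finset (X × X)).sup' hPne (fun p => dist p.1 p.2) with hDdef
  have hm : 0 < m := by
    rw [hmdef]
    exact (Finset.lt_inf'_iff hPne).mpr
      (fun p hp => dist_pos.mpr (Finset.mem_offDiag.mp hp).2.2)
  have hdistm : ∀ x y : X, x ≠ y → m ≤ dist x y := by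
    intro x y hne
    rw [hmdef]
    exact Finset.inf'_le (b := (x, y)) _ (Finset.mem_offDiag.mpr ⟨mem_univ _, mem_univ _, hne⟩)
  have hdistD : ∀ x y : X, dist x y ≤ D := by
    intro x y
    by_cases hne : x = y
    · subst hne
      rw [dist_self]
      calc (0:ℝ) ≤ m := le_of_lt hm
        _ ≤ dist x₀ y₀ := hdistm _ _ hxy₀
        _ ≤ D := by
            rw [hDdef]
            exact Finset.le_sup' (b := (x₀, y₀)) (fun p => dist p.1 p.2) (Finset.mem_offDiag.mpr ⟨mem_univ _, mem_univ _, hxy₀⟩)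
    · rw [hDdef]
      exact Finset.le_sup' (b := (x, y)) (fun p => dist p.1 p.2) (Finset.mem_offDiag.mpr ⟨mem_univ _, mem_univ _, hne⟩)
  have hD : 0 < D := lt_of_lt_of_le hm (le_trans (hdistm _ _ hxy₀) (hdistD x₀ y₀))
  -- scales
  obtain ⟨SK, hSK⟩ : ∃ k : ℕ, D / m < 2 ^ k := pow_unbounded_of_one_lt _ (by norm_num)
  set Δ : ℕ → ℝ := fun k => D / 2 ^ (k + 1) with hΔdef
  set tk : ℕ → ℝ := fun k => 2 * Δ k / α with htkdef
  have hΔpos : ∀ k, 0 < Δ k := fun k => by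
    rw [hΔdef]; positivity
  have htpos : ∀ k, 0 < tk k := fun k => by
    have := hΔpos k
    rw [htkdef]; dsimp only; positivity
  have hΔhalf : ∀ k, Δ (k + 1) = Δ k / 2 := by
    intro k
    rw [hΔdef]
    show D / 2 ^ (k + 1 + 1) = D / 2 ^ (k + 1) / 2
    rw [div_div, ← pow_succ]
  have hΔanti : ∀ a b : ℕ, a ≤ b → Δ b ≤ Δ a := by
    intro a b hab
    rw [hΔdef]
    apply div_le_div_of_nonneg_left (le_of_lt hD) (by positivity)
    apply pow_le_pow_right₀ (by norm_num)
    omega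
  have hΔSK : Δ SK < m := by
    rw [hΔdef]
    show D / 2 ^ (SK + 1) < m
    rw [div_lt_iff₀ (by positivity)]
    rw [div_lt_iff₀ hm] at hSK
    calc D < 2 ^ SK * m := hSK
      _ ≤ 2 ^ (SK + 1) * m := by
          apply mul_le_mul_of_nonneg_right _ (le_of_lt hm)
          apply pow_le_pow_right₀ (by norm_num)
          omega
      _ = m * 2 ^ (SK + 1) := by ring
  have htN : ∀ k, 2 * (N:ℝ) * tk k ≤ Δ k / 8 := by
    intro k
    have hΔk := hΔpos k
    rw [htkdef]
    show 2 * (N:ℝ) * (2 * Δ k / α) ≤ Δ k / 8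
    have h1 : (N:ℝ) * 32 ≤ α := by
      rw [le_div_iff₀ (by norm_num : (0:ℝ) < 32)] at hNα
      linarith
    have he : 2 * (N:ℝ) * (2 * Δ k / α) = (4 * (N:ℝ) * Δ k) / α := by ring
    rw [he, div_le_div_iff₀ hα0 (by norm_num : (0:ℝ) < 8)]
    have h2 : ((N:ℝ) * 32) * Δ k ≤ α * Δ k :=
      mul_le_mul_of_nonneg_right h1 (le_of_lt (hΔpos k))
    nlinarith
  -- radii
  set rad : ℕ → ℕ → ℝ := fun k i => Δ k / 4 + (2 * (i:ℝ) + 1) * tk k with hraddef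
  have hradnn : ∀ k i, 0 ≤ rad k i := by
    intro k i
    have h1 : (0:ℝ) ≤ (2 * (i:ℝ) + 1) * tk k := by positivity
    have := hΔpos k
    rw [hraddef]
    dsimp only
    linarith
  have hradub : ∀ k, ∀ i < N, rad k i + tk k ≤ 3 / 8 * Δ k := by
    intro k i hi
    have hi' : (i:ℝ) + 1 ≤ (N:ℝ) := by exact_mod_cast hi
    have h1 : (2 * (i:ℝ) + 2) * tk k ≤ 2 * (N:ℝ) * tk k := by
      apply mul_le_mul_of_nonneg_right _ (le_of_lt (htpos k))
      linarith
    have h2 := htN k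
    have := hΔpos k
    rw [hraddef]
    dsimp only
    linarith
  -- sample space
  set Ω : Finset (Fin (SK + 1) → List X × ℕ) :=
    Fintype.piFinset (fun _ => Osc w N) with hΩdef
  set μ : (Fin (SK + 1) → List X × ℕ) → ℝ := fun p => ∏ k, musc w N (p k) with hμdef
  set ψ : ℝ := 1 - 1 / (N:ℝ) with hψdef
  set W : ℝ := ∑ x, w x with hWdef
  have hW : 0 < W := Finset.sum_pos (fun x _ => hw x) ⟨x₀, mem_univ _⟩
  set padA : Fin (SK + 1) → X → List X × ℕ → Bool :=
    fun k x a => goodB (ball x (rad k.val a.2 + tk k.val))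
      (ball x (rad k.val a.2 - tk k.val)) a.1 with hpadAdef
  -- per-point success probability
  have perx : ∀ x : X, (w x / W) ^ ((1:ℝ)/N) ≤
      ∑ p ∈ Ω, μ p * (if ∀ k, padA k x (p k) = true then 1 else 0) := by
    intro x
    set A : ℕ → ℝ := fun k => wb w x (Δ k / 4) with hAdef
    set B : ℕ → ℝ := fun k => wb w x (Δ k / 4 + 2 * N * tk k) with hBdef
    have hApos : ∀ k, 0 < A k := fun k => wb_pos hw (by
      have := hΔpos k; positivity)
    have hAB : ∀ k, A k ≤ B k := fun k => wb_mono hw (by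
      have h1 : 0 ≤ 2 * (N:ℝ) * tk k := by positivity
      linarith)
    have hBA : ∀ k, B (k + 1) ≤ A k := by
      intro k
      apply wb_mono hw
      have h1 := htN (k + 1)
      have h2 := hΔhalf k
      have h3 := hΔpos k
      linarith
    have hsplit : ∀ p, μ p * (if ∀ k, padA k x (p k) = true then 1 else 0)
        = ∏ k, (musc w N (p k) * (if padA k x (p k) = true then 1 else 0)) := by
      intro p
      rw [Finset.prod_mul_distrib]
      congr 1
      rw [Finset.prod_boole]
      by_cases hc : ∀ k, padA k x (p k) = true
      · rw [if_pos hc, if_pos (fun k _ => hc k)]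
      · rw [if_neg hc, if_neg (fun hk => hc (fun k => hk k (mem_univ k)))]
    rw [Finset.sum_congr rfl (fun p _ => hsplit p), hΩdef,
      ← Finset.prod_univ_sum (fun _ => Osc w N)
        (fun k a => musc w N a * (if padA k x a = true then 1 else 0))]
    have perscale : ∀ k : Fin (SK + 1),
        (A k.val / B k.val) ^ ((1:ℝ)/N) ≤
          ∑ a ∈ Osc w N, musc w N a * (if padA k x a = true then 1 else 0) := by
      intro k
      have hpp := pad_prob (w := w) hw hN1 (q := Δ k.val / 4)
        (t := tk k.val) (by have := hΔpos k.val; positivity) (le_of_lt (htpos k.val)) x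
      exact hpp
    calc (w x / W) ^ ((1:ℝ)/N)
        ≤ (∏ k ∈ range (SK + 1), A k / B k) ^ ((1:ℝ)/N) := by
          apply Real.rpow_le_rpow (div_nonneg (le_of_lt (hw x)) (le_of_lt hW)) _ (by positivity)
          calc w x / W ≤ A SK / B 0 := by
                have hASK : A SK = w x := by
                  rw [hAdef]
                  show wb w x (Δ SK / 4) = w x
                  unfold wb
                  have hball : ball x (Δ SK / 4) = {x} := by
                    apply Finset.ext
                    intro z
                    rw [mem_ball_iff, Finset.mem_singleton]
                    constructor
                    · intro hz
                      by_contra hne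
                      have := hdistm z x hne
                      have := hΔpos SK
                      linarith [hΔSK]
                    · intro hz
                      subst hz
                      rw [dist_self]
                      have := hΔpos SK
                      linarith
                  rw [hball, Finset.sum_singleton]
                have hB0 : B 0 ≤ W := by
                  rw [hBdef, hWdef]
                  exact Finset.sum_le_sum_of_subset_of_nonneg (Finset.subset_univ _)
                    (fun z _ _ => le_of_lt (hw z))
                rw [hASK]
                apply div_le_div_of_nonneg_left (le_of_lt (hw x)) _ hB0
                exact lt_of_lt_of_le (hApos 0) (hAB 0)
            _ ≤ ∏ k ∈ range (SK + 1), A k / B k := chain_prod A B hApos hAB hBA SK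
      _ = ∏ k ∈ range (SK + 1), (A k / B k) ^ ((1:ℝ)/N) := by
          rw [Real.finset_prod_rpow _ _ (fun k _ => by
            have := hApos k
            have := lt_of_lt_of_le (hApos k) (hAB k)
            positivity)]
      _ = ∏ k : Fin (SK + 1), (A k.val / B k.val) ^ ((1:ℝ)/N) := by
          rw [← Fin.prod_univ_eq_prod_range (fun k => (A k / B k) ^ ((1:ℝ)/N)) (SK + 1)]
      _ ≤ ∏ k : Fin (SK + 1), ∑ a ∈ Osc w N, musc w N a * (if padA k x a = true then 1 else 0) := by
          apply Finset.prod_le_prod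
          · intro k _
            exact Real.rpow_nonneg
              (le_of_lt (div_pos (hApos k) (lt_of_lt_of_le (hApos k) (hAB k)))) _
          · intro k _
            exact perscale k
  -- expectation argument
  set Yof : (Fin (SK + 1) → List X × ℕ) → Finset X :=
    fun p => univ.filter (fun x => ∀ k, padA k x (p k) = true) with hYofdef
  have swap : ∑ p ∈ Ω, μ p * (∑ x ∈ Yof p, w x ^ ψ)
      = ∑ x : X, w x ^ ψ * ∑ p ∈ Ω, μ p * (if ∀ k, padA k x (p k) = true then 1 else 0) := by
    have h1 : ∀ p, μ p * (∑ x ∈ Yof p, w x ^ ψ)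
        = ∑ x : X, w x ^ ψ * (μ p * (if ∀ k, padA k x (p k) = true then 1 else 0)) := by
      intro p
      rw [hYofdef]
      dsimp only
      rw [Finset.sum_filter, Finset.mul_sum]
      apply Finset.sum_congr rfl
      intro x _
      by_cases hc : ∀ k, padA k x (p k) = true
      · rw [if_pos hc, if_pos hc]; ring
      · rw [if_neg hc, if_neg hc]; ring
    rw [Finset.sum_congr rfl (fun p _ => h1 p), Finset.sum_comm]
    apply Finset.sum_congr rfl
    intro x _
    rw [← Finset.mul_sum]
  have Esum : W ^ ψ ≤ ∑ p ∈ Ω, μ p * (∑ x ∈ Yof p, w x ^ ψ) := by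
    rw [swap]
    have hterm : ∀ x : X, w x ^ ψ * (w x / W) ^ ((1:ℝ)/N) = w x / W ^ ((1:ℝ)/N) := by
      intro x
      rw [Real.div_rpow (le_of_lt (hw x)) (le_of_lt hW), hψdef,
        ← mul_div_assoc, ← Real.rpow_add (hw x)]
      norm_num
    have hsum : ∑ x : X, w x ^ ψ * (w x / W) ^ ((1:ℝ)/N) = W ^ ψ := by
      rw [Finset.sum_congr rfl (fun x _ => hterm x), ← Finset.sum_div, ← hWdef, hψdef,
        Real.rpow_sub hW, Real.rpow_one]
    rw [← hsum]
    apply Finset.sum_le_sum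
    intro x _
    apply mul_le_mul_of_nonneg_left (perx x)
    exact Real.rpow_nonneg (le_of_lt (hw x)) _
  have hOscne : (Osc w N).Nonempty := by
    have h1 := sum_plw w (Fintype.card X) (univ : Finset X) (by simp) (fun x _ => hw x)
    have h2 : (orders (Fintype.card X) (univ : Finset X)).Nonempty := by
      rcases Finset.eq_empty_or_nonempty (orders (Fintype.card X) (univ : Finset X)) with h | h
      · rw [h, Finset.sum_empty] at h1; norm_num at h1
      · exact h
    exact h2.product ⟨0, Finset.mem_range.mpr (by omega)⟩
  have hΩne : Ω.Nonempty := by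
    rw [hΩdef]
    exact Fintype.piFinset_nonempty.mpr (fun _ => hOscne)
  have hμpos : ∀ p, 0 < μ p := by
    intro p
    rw [hμdef]
    apply Finset.prod_pos
    intro k _
    exact div_pos (plw_pos hw _) hNpos
  have hμsum : ∑ p ∈ Ω, μ p = 1 := by
    rw [hΩdef, hμdef, ← Finset.prod_univ_sum (fun _ => Osc w N) (fun _ a => musc w N a)]
    rw [Finset.prod_congr rfl (fun k _ => sum_musc hw hN1)]
    simp
  obtain ⟨p, hpΩ, hpS⟩ : ∃ p ∈ Ω, W ^ ψ ≤ ∑ x ∈ Yof p, w x ^ ψ := by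
    by_contra hcon
    push_neg at hcon
    have hlt : ∑ p ∈ Ω, μ p * (∑ x ∈ Yof p, w x ^ ψ) < ∑ p ∈ Ω, μ p * W ^ ψ := by
      apply Finset.sum_lt_sum_of_nonempty hΩne
      intro p hp
      exact mul_lt_mul_of_pos_left (hcon p hp) (hμpos p)
    rw [← Finset.sum_mul, hμsum, one_mul] at hlt
    linarith [Esum]
  have hpmem : ∀ k : Fin (SK + 1), (p k).2 < N := by
    intro k
    have := (Fintype.mem_piFinset.mp (hΩdef ▸ hpΩ)) k
    exact Finset.mem_range.mp (Finset.mem_product.mp this).2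
  -- the cluster-center functions
  set kfin : ℕ → Fin (SK + 1) := fun k => ⟨min k SK, by omega⟩ with hkfindef
  set c : ℕ → X → X := fun k x =>
    ctr (p (kfin k)).1 (rad (min k SK) ((p (kfin k)).2)) x with hcdef
  have hradub' : ∀ k, rad (min k SK) ((p (kfin k)).2) ≤ 3 / 8 * Δ (min k SK) := by
    intro k
    have h1 := hradub (min k SK) _ (hpmem (kfin k))
    have := htpos (min k SK)
    linarith
  have hctr_close : ∀ (k : ℕ) (x y : X), c k x = c k y →
      dist x y ≤ 3 / 4 * Δ (min k SK) := by
    intro k x y hc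
    have h1 := dist_le_of_ctr_eq (hradnn (min k SK) ((p (kfin k)).2)) hc
    have h2 := hradub' k
    have h3 := mul_le_mul_of_nonneg_left h2 (by norm_num : (0:ℝ) ≤ 2)
    calc dist x y ≤ 2 * rad (min k SK) ((p (kfin k)).2) := h1
      _ ≤ 2 * (3 / 8 * Δ (min k SK)) := h3
      _ = 3 / 4 * Δ (min k SK) := by ring
  have hex : ∀ x y : X, x ≠ y → ∃ k, c k x ≠ c k y := by
    intro x y hne
    refine ⟨SK, fun heq => ?_⟩
    have h1 := hctr_close SK x y heq
    rw [min_self] at h1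
    have h2 := hdistm x y hne
    have := hΔpos SK
    linarith [hΔSK]
  set ρ : X → X → ℝ := fun x y =>
    if h : x = y then 0 else 2 * Δ (Nat.find (hex x y h)) with hρdef
  have hKle : ∀ (x y : X) (h : x ≠ y), Nat.find (hex x y h) ≤ SK := by
    intro x y h
    apply Nat.find_le
    intro heq
    have h1 := hctr_close SK x y heq
    rw [min_self] at h1
    have h2 := hdistm x y h
    have := hΔpos SK
    linarith [hΔSK]
  have hρ_pos : ∀ (x y : X), x ≠ y → 0 < ρ x y := by
    intro x y h
    rw [hρdef]
    dsimp only
    rw [dif_neg h]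
    have := hΔpos (Nat.find (hex x y h))
    linarith
  have hρ_symm : ∀ x y : X, ρ x y = ρ y x := by
    intro x y
    rw [hρdef]
    dsimp only
    by_cases h : x = y
    · rw [dif_pos h, dif_pos h.symm]
    · rw [dif_neg h, dif_neg (Ne.symm h)]
      congr 2
      apply le_antisymm
      · exact Nat.find_le (Ne.symm (Nat.find_spec (hex y x (Ne.symm h))))
      · exact Nat.find_le (Ne.symm (Nat.find_spec (hex x y h)))
  -- upper bound: dist ≤ ρ
  have hdist_le : ∀ x y : X, x ≠ y → dist x y ≤ ρ x y := by
    intro x y h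
    rw [hρdef]
    dsimp only
    rw [dif_neg h]
    rcases Nat.eq_zero_or_pos (Nat.find (hex x y h)) with h0 | hpos
    · rw [h0]
      have : 2 * Δ 0 = D := by
        rw [hΔdef]
        show 2 * (D / 2 ^ (0 + 1)) = D
        rw [pow_one]
        ring
      rw [this]
      exact hdistD x y
    · obtain ⟨j, hj⟩ : ∃ j, Nat.find (hex x y h) = j + 1 := ⟨Nat.find (hex x y h) - 1, by omega⟩
      have hmin := Nat.find_min (hex x y h) (show j < Nat.find (hex x y h) by omega)
      push_neg at hmin
      have h1 := hctr_close j x y hmin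
      have hjle : j ≤ SK := by
        have := hKle x y h
        omega
      rw [min_eq_left hjle] at h1
      have h2 := hΔhalf j
      have h3 := hΔpos (j + 1)
      rw [hj]
      linarith
  -- lower bound: ρ ≤ α * dist, for padded points
  have hpad_lower : ∀ x ∈ Yof p, ∀ y : X, ∀ (h : x ≠ y),
      tk (Nat.find (hex x y h)) < dist x y := by
    intro x hx y h
    set K := Nat.find (hex x y h) with hKdef
    have hKSK : K ≤ SK := hKle x y h
    have hxpad : padA (kfin K) x (p (kfin K)) = true := by
      rw [hYofdef] at hx
      exact (Finset.mem_filter.mp hx).2 (kfin K)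
    by_contra hc
    push_neg at hc
    have hspec := Nat.find_spec (hex x y h)
    apply hspec
    have hdxy : dist x y ≤ tk (min K SK) := by
      rw [min_eq_left hKSK]
      exact hc
    have heq := ctr_eq_of_good (le_of_lt (htpos (min K SK))) hxpad y hdxy
    exact heq.symm
  have hρnn : ∀ x y : X, 0 ≤ ρ x y := by
    intro x y
    by_cases h : x = y
    · rw [hρdef]; dsimp only; rw [dif_pos h]
    · exact le_of_lt (hρ_pos x y h)
  -- strong triangle inequality
  have htri : ∀ x y z : X, ρ x z ≤ max (ρ x y) (ρ y z) := by
    intro x y z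
    by_cases hxz : x = z
    · rw [hρdef]; dsimp only; rw [dif_pos hxz]
      exact le_trans (hρnn x y) (le_max_left _ _)
    · by_cases hxy : x = y
      · subst hxy
        exact le_max_right _ _
      · by_cases hyz : y = z
        · subst hyz
          exact le_max_left _ _
        · have hmin : min (Nat.find (hex x y hxy)) (Nat.find (hex y z hyz))
              ≤ Nat.find (hex x z hxz) := by
            apply (Nat.le_find_iff (hex x z hxz) _).mpr
            intro j hj
            push_neg
            have h1 : c j x = c j y := by
              have := Nat.find_min (hex x y hxy)
                (lt_of_lt_of_le hj (min_le_left _ _))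
              push_neg at this
              exact this
            have h2 : c j y = c j z := by
              have := Nat.find_min (hex y z hyz)
                (lt_of_lt_of_le hj (min_le_right _ _))
              push_neg at this
              exact this
            exact h1.trans h2
          have hΔle : Δ (Nat.find (hex x z hxz))
              ≤ Δ (min (Nat.find (hex x y hxy)) (Nat.find (hex y z hyz))) :=
            hΔanti _ _ hmin
          rw [hρdef]
          dsimp only
          rw [dif_neg hxz, dif_neg hxy, dif_neg hyz]
          rcases le_total (Nat.find (hex x y hxy)) (Nat.find (hex y z hyz)) with hle | hle
          · apply le_trans _ (le_max_left _ _)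
            rw [min_eq_left hle] at hΔle
            linarith
          · apply le_trans _ (le_max_right _ _)
            rw [min_eq_right hle] at hΔle
            linarith
  -- assemble
  refine ⟨Yof p, ρ, ⟨?_, ?_, ?_, ?_⟩, ?_, ?_⟩
  · intro x _
    rw [hρdef]; dsimp only; rw [dif_pos rfl]
  · intro x _ y _ hne
    exact hρ_pos x y hne
  · intro x _ y _
    exact hρ_symm x y
  · intro x _ y _ z _
    exact htri x y z
  · intro x hx y hy
    constructor
    · by_cases h : x = y
      · subst h
        rw [dist_self]
        exact hρnn x x
      · exact hdist_le x y h
    · by_cases h : x = y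
      · subst h
        rw [dist_self, mul_zero, hρdef]
        dsimp only
        rw [dif_pos rfl]
      · have hlow := hpad_lower x hx y h
        rw [hρdef]
        dsimp only
        rw [dif_neg h]
        have htkval : tk (Nat.find (hex x y h)) = 2 * Δ (Nat.find (hex x y h)) / α := by
          rw [htkdef]
        have : 2 * Δ (Nat.find (hex x y h)) = α * tk (Nat.find (hex x y h)) := by
          rw [htkval]
          field_simp
        rw [this]
        exact le_of_lt (mul_lt_mul_of_pos_left hlow hα0)
  · exact hpS

end Core

end WR


/-- The weighted metric Ramsey theorem for spaces of aspect ratio at most `Φ`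
(i.e. `dist x y ≤ Φ · dist x' y'` for all pairs of distinct points): with
`ψ = max(0, 1 - C·(log α + log log(4Φ))/α)`, some subset `Y` which is `α`-equivalent
to an ultrametric satisfies `Σ_{y∈Y} w(y)^ψ ≥ (Σ_{x∈X} w(x))^ψ`. -/
theorem weighted_ramsey_bounded_aspect_ratio :
    ∃ C : ℝ, 0 < C ∧
      ∀ (α Φ : ℝ), 2 < α → 1 ≤ Φ →
        ∀ (X : Type) [MetricSpace X] [Fintype X], 2 ≤ Fintype.card X →
          (∀ x y x' y' : X, x ≠ y → x' ≠ y' → dist x y ≤ Φ * dist x' y') →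
          ∀ w : X → ℝ, (∀ x, 0 < w x) →
            ∃ (Y : Finset X) (ρ : X → X → ℝ),
              IsUltrametricOn (↑Y) ρ ∧
              (∀ x ∈ Y, ∀ y ∈ Y, dist x y ≤ ρ x y ∧ ρ x y ≤ α * dist x y) ∧
              (∑ x, w x) ^
                  (max 0 (1 - C * (Real.log α + Real.log (Real.log (4 * Φ))) / α)) ≤
                ∑ y ∈ Y, w y ^
                  (max 0 (1 - C * (Real.log α + Real.log (Real.log (4 * Φ))) / α)) := by

  classical
  refine ⟨128, by norm_num, ?_⟩
  intro α Φ hα hΦ X _ _ hcard _ w hw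
  have hα0 : (0:ℝ) < α := by linarith
  -- logarithmic lower bounds
  have hexp_half : Real.exp (1/2) < 2 := by
    have h1 : Real.exp (1/2) ^ 2 = Real.exp 1 := by
      rw [sq, ← Real.exp_add]
      norm_num
    have h2 : Real.exp (1/2) ^ 2 < 2 ^ 2 := by
      rw [h1]
      nlinarith [Real.exp_one_lt_d9]
    exact lt_of_pow_lt_pow_left₀ 2 (by norm_num) h2
  have hlog2 : (1:ℝ)/2 < Real.log 2 :=
    (Real.lt_log_iff_exp_lt (by norm_num)).mpr hexp_half
  have hlogα : (1:ℝ)/2 < Real.log α := by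
    have := Real.log_lt_log (by norm_num : (0:ℝ) < 2) hα
    linarith
  have hloglog : 0 ≤ Real.log (Real.log (4 * Φ)) := by
    apply Real.log_nonneg
    have h4 : Real.log 4 ≤ Real.log (4 * Φ) := by
      apply Real.log_le_log (by norm_num)
      nlinarith
    have h5 : Real.log 4 = 2 * Real.log 2 := by
      rw [show (4:ℝ) = 2 ^ 2 by norm_num, Real.log_pow]
      push_cast
      ring
    linarith
  have hS : (1:ℝ)/2 ≤ Real.log α + Real.log (Real.log (4 * Φ)) := by linarith
  set S : ℝ := Real.log α + Real.log (Real.log (4 * Φ)) with hSdef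
  rcases le_or_gt (1 - 128 * S / α) 0 with hE | hE
  · -- trivial case: exponent is 0, take a singleton
    rw [max_eq_left hE]
    have : 0 < Fintype.card X := by omega
    obtain ⟨x₀⟩ := Fintype.card_pos_iff.mp this
    refine ⟨{x₀}, fun _ _ => 0, ⟨?_, ?_, ?_, ?_⟩, ?_, ?_⟩
    · intro x _; rfl
    · intro x hx y hy hne
      exfalso
      rw [Finset.coe_singleton, Set.mem_singleton_iff] at hx hy
      exact hne (hx.trans hy.symm)
    · intro x _ y _; rfl
    · intro x _ y _ z _
      simp
    · intro x hx y hy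
      rw [Finset.mem_singleton] at hx hy
      subst hx; subst hy
      simp [dist_self]
    · rw [Real.rpow_zero, Finset.sum_singleton, Real.rpow_zero]
  · -- main case
    rw [max_eq_right (le_of_lt hE)]
    have h128 : 128 * S < α := by
      rw [sub_pos, div_lt_one hα0] at hE
      exact hE
    have hα64 : 64 ≤ α := by linarith
    letI : DecidableEq X := Classical.decEq X
    obtain ⟨Y, ρ, hult, hdst, hsum'⟩ := WR.core hcard w hw α hα64
    set N : ℕ := ⌊α / 32⌋₊ with hNdef
    have hNge : α / 64 ≤ (N:ℝ) := by
      have h1 : α / 32 < (N:ℝ) + 1 := Nat.lt_floor_add_one _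
      have h2 : (1:ℝ) ≤ α / 64 := by linarith
      linarith
    have hNpos : (0:ℝ) < N := by linarith
    have hψle : 1 - 128 * S / α ≤ 1 - 1 / (N:ℝ) := by
      have h1 : 1 / (N:ℝ) ≤ 64 / α := by
        rw [div_le_div_iff₀ hNpos hα0]
        nlinarith
      have h2 : 64 / α ≤ 128 * S / α :=
        (div_le_div_iff_of_pos_right hα0).mpr (by linarith)
      linarith [h1, h2]
    set ψ : ℝ := 1 - 1 / (N:ℝ) with hψdef
    set E : ℝ := 1 - 128 * S / α with hEdef
    set W : ℝ := ∑ x, w x with hWdef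
    have hW : 0 < W := by
      rw [hWdef]
      apply Finset.sum_pos (fun x _ => hw x)
      have : 0 < Fintype.card X := by omega
      obtain ⟨x₀⟩ := Fintype.card_pos_iff.mp this
      exact ⟨x₀, Finset.mem_univ _⟩
    have hwle : ∀ y : X, w y ≤ W := by
      intro y
      rw [hWdef]
      exact Finset.single_le_sum (fun x _ => le_of_lt (hw x)) (Finset.mem_univ y)
    refine ⟨Y, ρ, hult, hdst, ?_⟩
    -- from the ψ-inequality to the E-inequality
    have hstep : ∀ y : X, (w y / W) ^ ψ ≤ (w y / W) ^ E :=
      fun y => Real.rpow_le_rpow_of_exponent_ge (div_pos (hw y) hW)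
        ((div_le_one hW).mpr (hwle y)) hψle
    have hdiv : ∀ (e : ℝ), ∑ y ∈ Y, (w y / W) ^ e = (∑ y ∈ Y, w y ^ e) / W ^ e := by
      intro e
      rw [Finset.sum_div]
      apply Finset.sum_congr rfl
      intro y _
      rw [Real.div_rpow (le_of_lt (hw y)) (le_of_lt hW)]
    have h2 : (1:ℝ) ≤ ∑ y ∈ Y, (w y / W) ^ ψ := by
      rw [hdiv ψ]
      rw [one_le_div (Real.rpow_pos_of_pos hW ψ)]
      exact hsum'
    have h3 : (1:ℝ) ≤ ∑ y ∈ Y, (w y / W) ^ E :=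
      le_trans h2 (Finset.sum_le_sum (fun y _ => hstep y))
    rw [hdiv E, one_le_div (Real.rpow_pos_of_pos hW E)] at h3
    exact h3
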